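/- Let X be a connected graph on which a group N acts by automorphisms with uniformly bounded orbits. Then for any two vertices u, v of X, the distance in the quotient graph X/N between the orbits N·u and N·v satisfies d(u,v) − 2R ≤ (R+1)·d_{X/N}(N·u, N·v) and d_{X/N}(N·u, N·v) ≤ d(u,v), where R bounds the diameter of every orbit. -/

import Mathlib

/-- The quotient graph of a graph by a group action on the vertices. -/
def quotientGraph {V : Type*} (G : SimpleGraph V) (N : Type*) [Group N] [MulAction N V] :
    SimpleGraph (Quotient (MulAction.orbitRel N V)) where
  Adj x y := x ≠ y ∧ ∃ u v : V, Quotient.mk (MulAction.orbitRel N V) u = x ∧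
    Quotient.mk (MulAction.orbitRel N V) v = y ∧ G.Adj u v
  symm := by
    constructor
    rintro x y ⟨hne, u, v, hu, hv, h⟩
    exact ⟨hne.symm, v, u, hv, hu, h.symm⟩
  loopless := by
    constructor
    rintro x ⟨hne, -⟩
    exact hne rfl

/-- A walk in `G` projects to a walk in the quotient of length at most the original. -/
lemma quotientGraph_walk {V : Type*} (G : SimpleGraph V) (N : Type*) [Group N] [MulAction N V] :
    ∀ {u v : V} (p : G.Walk u v),
      ∃ q : (quotientGraph G N).Walk (Quotient.mk (MulAction.orbitRel N V) u)
        (Quotient.mk (MulAction.orbitRel N V) v), q.length ≤ p.length := by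
  intro u v p
  induction p with
  | nil => exact ⟨SimpleGraph.Walk.nil, le_refl _⟩
  | @cons a b c h p ih =>
    obtain ⟨q, hq⟩ := ih
    by_cases heq : Quotient.mk (MulAction.orbitRel N V) a = Quotient.mk (MulAction.orbitRel N V) b
    · exact ⟨q.copy heq.symm rfl, by simp [SimpleGraph.Walk.length_copy]; omega⟩
    · exact ⟨SimpleGraph.Walk.cons ⟨heq, _, _, rfl, rfl, h⟩ q, by exact Nat.succ_le_succ hq⟩

/-- Vertices in the same orbit are at distance at most `R`. -/
lemma orbit_dist_le {V : Type*} (G : SimpleGraph V) (N : Type*) [Group N] [MulAction N V]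
    (R : ℕ) (horb : ∀ (v : V) (g h : N), G.dist (g • v) (h • v) ≤ R)
    {u v : V} (h : Quotient.mk (MulAction.orbitRel N V) u = Quotient.mk (MulAction.orbitRel N V) v) :
    G.dist u v ≤ R := by
  obtain ⟨g, hg⟩ := Quotient.exact h
  have := horb v g 1
  simpa [← hg, one_smul] using this

/-- Key lower-bound lemma: lifting a quotient walk. -/
lemma quotientGraph_lift {V : Type*} (G : SimpleGraph V) (hconn : G.Connected)
    (N : Type*) [Group N] [MulAction N V]
    (R : ℕ) (horb : ∀ (v : V) (g h : N), G.dist (g • v) (h • v) ≤ R) :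
    ∀ {x y : Quotient (MulAction.orbitRel N V)} (q : (quotientGraph G N).Walk x y)
      (u v : V), Quotient.mk (MulAction.orbitRel N V) u = x →
      Quotient.mk (MulAction.orbitRel N V) v = y →
      G.dist u v ≤ q.length * (R + 1) + R := by
  intro x y q
  induction q with
  | nil =>
    intro u v hu hv
    simpa using orbit_dist_le G N R horb (hu.trans hv.symm)
  | @cons x x' y hadj q ih =>
    intro u v hu hv
    obtain ⟨-, a, b, ha, hb, hab⟩ := hadj
    have h1 : G.dist u a ≤ R := orbit_dist_le G N R horb (by rw [hu, ha])
    have h2 : G.dist b v ≤ q.length * (R + 1) + R := ih b v hb hv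
    have h3 : G.dist a b ≤ 1 := by
      rw [SimpleGraph.dist_eq_one_iff_adj.mpr hab]
    calc G.dist u v ≤ G.dist u a + G.dist a v := hconn.dist_triangle
      _ ≤ G.dist u a + (G.dist a b + G.dist b v) := by
          exact Nat.add_le_add_left hconn.dist_triangle _
      _ ≤ R + (1 + (q.length * (R + 1) + R)) := by
          exact Nat.add_le_add h1 (Nat.add_le_add h3 h2)
      _ = (q.cons ⟨‹x ≠ x'›, a, b, ha, hb, hab⟩ : (quotientGraph G N).Walk x y).length * (R + 1) + R := by
          show _ = (q.length + 1) * (R + 1) + R; ring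
      _ = _ := rfl

/-- if `N` acts on a connected graph `X` by automorphisms with all orbits of
diameter at most `R`, then for all vertices `u, v` we have
`d(u,v) - 2R ≤ (R+1) · d_{X/N}(N·u, N·v)` and `d_{X/N}(N·u, N·v) ≤ d(u,v)`. -/
theorem stmt_5 {V : Type*} (G : SimpleGraph V) (hconn : G.Connected)
    (N : Type*) [Group N] [MulAction N V]
    (hact : ∀ (g : N) (u v : V), G.Adj u v → G.Adj (g • u) (g • v))
    (R : ℕ) (horb : ∀ (v : V) (g h : N), G.dist (g • v) (h • v) ≤ R) :
    ∀ u v : V,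
      (G.dist u v : ℤ) - 2 * R ≤ (R + 1) *
        ((quotientGraph G N).dist (Quotient.mk (MulAction.orbitRel N V) u)
          (Quotient.mk (MulAction.orbitRel N V) v) : ℤ) ∧
      (quotientGraph G N).dist (Quotient.mk (MulAction.orbitRel N V) u)
          (Quotient.mk (MulAction.orbitRel N V) v) ≤ G.dist u v := by
  intro u v
  -- upper bound
  obtain ⟨p, hp⟩ := hconn.exists_walk_length_eq_dist u v
  obtain ⟨q, hq⟩ := quotientGraph_walk G N p
  have hub : (quotientGraph G N).dist (Quotient.mk (MulAction.orbitRel N V) u)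
      (Quotient.mk (MulAction.orbitRel N V) v) ≤ G.dist u v := by
    calc _ ≤ q.length := SimpleGraph.dist_le q
      _ ≤ p.length := hq
      _ = G.dist u v := hp
  refine ⟨?_, hub⟩
  -- lower bound
  have hreach : (quotientGraph G N).Reachable (Quotient.mk (MulAction.orbitRel N V) u)
      (Quotient.mk (MulAction.orbitRel N V) v) := ⟨q⟩
  obtain ⟨q', hq'⟩ := hreach.exists_walk_length_eq_dist
  have hlb : G.dist u v ≤ q'.length * (R + 1) + R :=
    quotientGraph_lift G hconn N R horb q' u v rfl rfl
  rw [hq'] at hlb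
  have : (G.dist u v : ℤ) ≤ ((quotientGraph G N).dist (Quotient.mk (MulAction.orbitRel N V) u)
      (Quotient.mk (MulAction.orbitRel N V) v) : ℤ) * (R + 1) + R := by exact_mod_cast hlb
  push_cast at this ⊢
  nlinarith [this]
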